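/- Let B be a Hermitian 3×3 complex matrix, let Θ = Θ(0,0,0,B) (the 6×6 block matrix with B in the lower-left 3×3 block and zeros elsewhere), let X, Y be Hermitian 3×3 complex matrices, and let p, q ∈ ℝ. Then the symplectic action of Θ on P(X,Y,p,q) gives Θ·P(X,Y,p,q) = P(2·B*Y, pB, 0, tr(B∘X)). (Action of a null translation of the second kind.) -/

import Mathlib

open Matrix BigOperators

/-- 3×3 complex matrices. -/
abbrev Mat3 := Matrix (Fin 3) (Fin 3) ℂ

/-- Sign of an integer, valued in ℤ. -/
def sgnZ (n : ℤ) : ℤ := if 0 < n then 1 else if n < 0 then -1 else 0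

/-- The Levi-Civita symbol on `Fin 3`. -/
def eps (a b c : Fin 3) : ℤ :=
  sgnZ ((b : ℤ) - (a : ℤ)) * sgnZ ((c : ℤ) - (a : ℤ)) * sgnZ ((c : ℤ) - (b : ℤ))

/-- The cubie of a 3×3 matrix: (*X)_{abc} = X_a^m ε_{mbc}. -/
noncomputable def cubie (X : Mat3) (a b c : Fin 3) : ℂ :=
  ∑ m, X a m * ((eps m b c : ℤ) : ℂ)

/-- The Jordan product X∘Y = (XY+YX)/2. -/
noncomputable def jord (X Y : Mat3) : Mat3 := (1/2 : ℂ) • (X * Y + Y * X)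

/-- The Freudenthal product. -/
noncomputable def freud (X Y : Mat3) : Mat3 :=
  jord X Y - (1/2 : ℂ) • (X.trace • Y + Y.trace • X)
    + (1/2 : ℂ) • (X.trace * Y.trace - (jord X Y).trace) • (1 : Mat3)

/-- Reduce an index in {1,...,6} to an index in {1,2,3}: for a "large" index
(value ≥ 4, i.e. `Fin 6` value ≥ 3) this is a−3; "small" indices are unchanged. -/
def lo (a : Fin 6) : Fin 3 := ⟨a.val % 3, Nat.mod_lt _ (by norm_num)⟩

/-- The totally antisymmetric rank-3 tensor P(X,Y,p,q) on indices in {1,...,6}: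
its 000 cubie is p·ε, its 100 cubie is *Y, its 011 cubie is *X, its 111 cubie
is q·ε, and all other components are determined by total antisymmetry
(using that (*X)_{abc} is antisymmetric in its last two indices). -/
noncomputable def PT (X Y : Mat3) (p q : ℂ) : Fin 6 → Fin 6 → Fin 6 → ℂ := fun a b c =>
  if a.val < 3 then
    if b.val < 3 then
      if c.val < 3 then p * ((eps (lo a) (lo b) (lo c) : ℤ) : ℂ)  -- (s,s,s)
      else cubie Y (lo c) (lo a) (lo b)                            -- (s,s,l) = +P_{cab}
    else
      if c.val < 3 then -(cubie Y (lo b) (lo a) (lo c))            -- (s,l,s) = −P_{bac}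
      else cubie X (lo a) (lo b) (lo c)                            -- (s,l,l)
  else
    if b.val < 3 then
      if c.val < 3 then cubie Y (lo a) (lo b) (lo c)               -- (l,s,s)
      else -(cubie X (lo b) (lo a) (lo c))                         -- (l,s,l) = −P_{bac}
    else
      if c.val < 3 then cubie X (lo c) (lo a) (lo b)               -- (l,l,s) = +P_{cab}
      else q * ((eps (lo a) (lo b) (lo c) : ℤ) : ℂ)                -- (l,l,l)

/-- The action of a 6×6 matrix Θ on a rank-3 tensor:
(Θ·P)_{abc} = Θ_a^m P_{mbc} + Θ_b^m P_{amc} + Θ_c^m P_{abm}. -/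
noncomputable def act (Θ : Matrix (Fin 6) (Fin 6) ℂ) (P : Fin 6 → Fin 6 → Fin 6 → ℂ) :
    Fin 6 → Fin 6 → Fin 6 → ℂ := fun a b c =>
  (∑ m, Θ a m * P m b c) + (∑ m, Θ b m * P a m c) + (∑ m, Θ c m * P a b m)

/-- The 6×6 block matrix Θ(φ,ρ,A,B) = [[φ − (ρ/3)I, A],[B, −φ† + (ρ/3)I]]. -/
noncomputable def ThetaM (φ : Mat3) (ρ : ℝ) (A B : Mat3) : Matrix (Fin 6) (Fin 6) ℂ :=
  Matrix.reindex finSumFinEquiv finSumFinEquiv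
    (Matrix.fromBlocks (φ - ((ρ : ℂ)/3) • 1) A B (-φᴴ + ((ρ : ℂ)/3) • 1))

section Aux
lemma cub00 (X : Mat3) (a : Fin 3) : cubie X a 0 0 = 0 := by norm_num [cubie, Fin.sum_univ_three, eps, sgnZ]
lemma cub11 (X : Mat3) (a : Fin 3) : cubie X a 1 1 = 0 := by norm_num [cubie, Fin.sum_univ_three, eps, sgnZ]
lemma cub22 (X : Mat3) (a : Fin 3) : cubie X a 2 2 = 0 := by norm_num [cubie, Fin.sum_univ_three, eps, sgnZ]
lemma cub01 (X : Mat3) (a : Fin 3) : cubie X a 0 1 = X a 2 := by simp (config := {decide := true}) [cubie, Fin.sum_univ_three, eps, sgnZ]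
lemma cub10 (X : Mat3) (a : Fin 3) : cubie X a 1 0 = -X a 2 := by simp (config := {decide := true}) [cubie, Fin.sum_univ_three, eps, sgnZ]
lemma cub02 (X : Mat3) (a : Fin 3) : cubie X a 0 2 = -X a 1 := by norm_num [cubie, Fin.sum_univ_three, eps, sgnZ]
lemma cub20 (X : Mat3) (a : Fin 3) : cubie X a 2 0 = X a 1 := by norm_num [cubie, Fin.sum_univ_three, eps, sgnZ]
lemma cub12 (X : Mat3) (a : Fin 3) : cubie X a 1 2 = X a 0 := by norm_num [cubie, Fin.sum_univ_three, eps, sgnZ]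
lemma cub21 (X : Mat3) (a : Fin 3) : cubie X a 2 1 = -X a 0 := by norm_num [cubie, Fin.sum_univ_three, eps, sgnZ]

lemma lo0 : lo 0 = 0 := rfl
lemma lo1 : lo 1 = 1 := rfl
lemma lo2 : lo 2 = 2 := rfl
lemma lo3 : lo 3 = 0 := rfl
lemma lo4 : lo 4 = 1 := rfl
lemma lo5 : lo 5 = 2 := rfl
lemma lo0' (h : (0:ℕ) < 6) : lo ⟨0,h⟩ = 0 := by simp [lo, Fin.ext_iff]
lemma lo1' (h : (1:ℕ) < 6) : lo ⟨1,h⟩ = 1 := by simp [lo, Fin.ext_iff]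
lemma lo2' (h : (2:ℕ) < 6) : lo ⟨2,h⟩ = 2 := by simp [lo, Fin.ext_iff]
lemma lo3' (h : (3:ℕ) < 6) : lo ⟨3,h⟩ = 0 := by simp [lo, Fin.ext_iff]
lemma lo4' (h : (4:ℕ) < 6) : lo ⟨4,h⟩ = 1 := by simp [lo, Fin.ext_iff]
lemma lo5' (h : (5:ℕ) < 6) : lo ⟨5,h⟩ = 2 := by simp [lo, Fin.ext_iff]

lemma freud_apply (B Y : Mat3) (i j : Fin 3) : freud B Y i j =
    (1/2 : ℂ) * (∑ k, (B i k * Y k j + Y i k * B k j))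
    - (1/2 : ℂ) * ((∑ k, B k k) * Y i j + (∑ k, Y k k) * B i j)
    + (1/2 : ℂ) * ((∑ k, B k k) * (∑ k, Y k k)
        - (1/2 : ℂ) * (∑ k, ∑ m, (B k m * Y m k + Y k m * B m k))) * (if i = j then 1 else 0) := by
  simp [freud, jord, Matrix.trace, Matrix.diag, Matrix.mul_apply, Matrix.one_apply,
    Finset.mul_sum, Finset.sum_add_distrib, Fin.sum_univ_three]
  split <;> ring

lemma jordtr (B X : Mat3) : (jord B X).trace
    = (1/2 : ℂ) * (∑ k, ∑ m, (B k m * X m k + X k m * B m k)) := by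
  simp [jord, Matrix.trace, Matrix.diag, Matrix.mul_apply, Finset.sum_add_distrib,
    Fin.sum_univ_three]
  ring
end Aux

set_option maxHeartbeats 4000000 in
/-- the null translation Θ(0,0,0,B), with B Hermitian, acts on
P(X,Y,p,q) (X, Y Hermitian, p, q real) by Θ·P(X,Y,p,q) = P(2·B*Y, pB, 0, tr(B∘X)). -/
theorem stmt6 (B : Mat3) (hB : Bᴴ = B) (X Y : Mat3) (hX : Xᴴ = X) (hY : Yᴴ = Y)
    (p q : ℝ) :
    act (ThetaM 0 0 0 B) (PT X Y (p : ℂ) (q : ℂ))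
      = PT ((2 : ℂ) • freud B Y) ((p : ℂ) • B) 0 ((jord B X).trace) := by

  have thetaB : ∀ a m : Fin 6, ThetaM 0 0 0 B a m
      = if 3 ≤ a.val ∧ m.val < 3 then B (lo a) (lo m) else 0 := by
    intro a m
    fin_cases a <;> fin_cases m <;>
      simp [ThetaM, Matrix.fromBlocks, lo, finSumFinEquiv] <;> rfl
  funext a b c
  fin_cases a <;> fin_cases b <;> fin_cases c <;>
  · simp (config := { decide := true }) only [act, Fin.sum_univ_six, thetaB, PT,
      lo0, lo1, lo2, lo3, lo4, lo5, lo0', lo1', lo2', lo3', lo4', lo5',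
      cub00, cub11, cub22, cub01, cub10, cub02, cub20, cub12, cub21,
      freud_apply, jordtr, Matrix.smul_apply, Fin.sum_univ_three, Fin.isValue,
      if_true, if_false, smul_eq_mul, eps, sgnZ]
    norm_num
    try ring
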